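/- For the Gaussian kernel k(x,y) = exp(−(x−y)²/(2σ²)) on ℝ and any two probability measures μ, ν on ℝ, the squared MMD decomposes as MMD²(μ, ν; k) = ∑_{n=0}^∞ (1/(σ^{2n} n!)) ( m̃ₙ(μ) − m̃ₙ(ν) )², where m̃ₙ(μ) = E_{x∼μ}[ e^{−x²/(2σ²)} xⁿ ]. -/

import Mathlib

open MeasureTheory

/-- The squared maximum mean discrepancy between two probability measures on `ℝ` with respect
to a kernel `k`: `MMD²(μ, ν; k) = ∬k dμ⊗dμ + ∬k dν⊗dν − 2∬k dμ⊗dν`. -/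
noncomputable def mmdSq (k : ℝ → ℝ → ℝ) (μ ν : Measure ℝ) : ℝ :=
  (∫ x, ∫ x', k x x' ∂μ ∂μ) + (∫ y, ∫ y', k y y' ∂ν ∂ν) - 2 * ∫ x, ∫ y, k x y ∂ν ∂μ

/-- The Gaussian kernel `k(x,y) = exp(−(x−y)²/(2σ²))`. -/
noncomputable def gaussKernel (σ : ℝ) : ℝ → ℝ → ℝ :=
  fun x y => Real.exp (-(x - y) ^ 2 / (2 * σ ^ 2))

/-- The weighted moment `m̃ₙ(μ) = E_{x∼μ}[e^{−x²/(2σ²)} xⁿ]`. -/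
noncomputable def weightedMoment (σ : ℝ) (n : ℕ) (μ : Measure ℝ) : ℝ :=
  ∫ x, Real.exp (-x ^ 2 / (2 * σ ^ 2)) * x ^ n ∂μ

noncomputable def gW (σ : ℝ) (n : ℕ) (x : ℝ) : ℝ := Real.exp (-x ^ 2 / (2 * σ ^ 2)) * x ^ n

lemma exp_hasSum (x : ℝ) : HasSum (fun n : ℕ => x ^ n / n.factorial) (Real.exp x) := by
  rw [Real.exp_eq_exp_ℝ]
  exact NormedSpace.expSeries_div_hasSum_exp x

lemma pointwise_hasSum (σ : ℝ) (hσ : 0 < σ) (x y : ℝ) :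
    HasSum (fun n : ℕ => (1 / (σ ^ (2 * n) * n.factorial)) * (gW σ n x * gW σ n y))
      (gaussKernel σ x y) := by
  have h := (exp_hasSum (x * y / σ ^ 2)).mul_left
      (Real.exp (-x ^ 2 / (2 * σ ^ 2)) * Real.exp (-y ^ 2 / (2 * σ ^ 2)))
  have hσ2 : (σ:ℝ)^2 ≠ 0 := by positivity
  have hval : gaussKernel σ x y
      = Real.exp (-x ^ 2 / (2 * σ ^ 2)) * Real.exp (-y ^ 2 / (2 * σ ^ 2))
        * Real.exp (x * y / σ ^ 2) := by
    unfold gaussKernel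
    rw [← Real.exp_add, ← Real.exp_add]
    congr 1
    field_simp
    ring
  have hfn : ∀ n : ℕ, (1 / (σ ^ (2 * n) * n.factorial)) * (gW σ n x * gW σ n y)
      = Real.exp (-x ^ 2 / (2 * σ ^ 2)) * Real.exp (-y ^ 2 / (2 * σ ^ 2))
        * ((x * y / σ ^ 2) ^ n / n.factorial) := by
    intro n
    unfold gW
    rw [div_pow, mul_pow, pow_mul]
    have hn : (n.factorial : ℝ) ≠ 0 := Nat.cast_ne_zero.mpr n.factorial_ne_zero
    field_simp
  rw [hval]
  exact h.congr_fun fun n => (hfn n).symm ▸ rfl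

lemma gaussKernel_le_one (σ : ℝ) (hσ : 0 < σ) (x y : ℝ) : gaussKernel σ x y ≤ 1 := by
  unfold gaussKernel
  rw [Real.exp_le_one_iff]
  have : (0:ℝ) < 2 * σ ^ 2 := by positivity
  exact div_nonpos_of_nonpos_of_nonneg (neg_nonpos.mpr (sq_nonneg _)) this.le

lemma gW_continuous (σ : ℝ) (n : ℕ) : Continuous (gW σ n) := by
  unfold gW
  fun_prop

lemma norm_term (σ : ℝ) (hσ : 0 < σ) (n : ℕ) (x y : ℝ) :
    ‖(1 / (σ ^ (2 * n) * n.factorial)) * (gW σ n x * gW σ n y)‖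
      = (1 / (σ ^ (2 * n) * n.factorial)) * (gW σ n |x| * gW σ n |y|) := by
  have hgW : ∀ z : ℝ, |gW σ n z| = gW σ n |z| := by
    intro z
    unfold gW
    rw [abs_mul, abs_of_pos (Real.exp_pos _), abs_pow, sq_abs]
  rw [Real.norm_eq_abs, abs_mul, abs_mul, hgW, hgW, abs_of_nonneg (by positivity)]

lemma key (σ : ℝ) (hσ : 0 < σ) (μ ν : Measure ℝ)
    [IsProbabilityMeasure μ] [IsProbabilityMeasure ν] :
    ((∫ x, ∫ y, gaussKernel σ x y ∂ν ∂μ)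
      = ∑' n : ℕ, (1 / (σ ^ (2 * n) * n.factorial))
          * (weightedMoment σ n μ * weightedMoment σ n ν)) ∧
    Summable (fun n : ℕ => (1 / (σ ^ (2 * n) * n.factorial))
          * (weightedMoment σ n μ * weightedMoment σ n ν)) := by
  set f : ℕ → ℝ × ℝ → ℝ := fun n p =>
    (1 / (σ ^ (2 * n) * n.factorial)) * (gW σ n p.1 * gW σ n p.2) with hf
  have hfc : ∀ n, Continuous (f n) := fun n => by
    apply Continuous.mul continuous_const
    exact ((gW_continuous σ n).comp continuous_fst).mul
      ((gW_continuous σ n).comp continuous_snd)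
  have hfm : ∀ n, AEStronglyMeasurable (f n) (μ.prod ν) := fun n =>
    (hfc n).aestronglyMeasurable
  -- the lintegral bound
  have hbound : ∑' n : ℕ, ∫⁻ p, ‖f n p‖₊ ∂(μ.prod ν) ≤ 1 := by
    rw [← lintegral_tsum (fun n => (hfm n).aemeasurable.nnnorm.coe_nnreal_ennreal)]
    have hpt : ∀ p : ℝ × ℝ, ∑' n : ℕ, (‖f n p‖₊ : ENNReal) ≤ 1 := by
      intro p
      have hs : HasSum (fun n : ℕ => ‖f n p‖) (gaussKernel σ |p.1| |p.2|) := by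
        have := pointwise_hasSum σ hσ |p.1| |p.2|
        exact this.congr_fun fun n => norm_term σ hσ n p.1 p.2
      have h1 : ∑' n : ℕ, (‖f n p‖₊ : ENNReal) = ENNReal.ofReal (∑' n, ‖f n p‖) := by
        rw [ENNReal.ofReal_tsum_of_nonneg (fun n => norm_nonneg _) hs.summable]
        simp [← Real.enorm_eq_ofReal_abs, enorm_eq_nnnorm]
      rw [h1, hs.tsum_eq]
      exact ENNReal.ofReal_le_one.mpr (gaussKernel_le_one σ hσ _ _)
    calc ∫⁻ p, ∑' n : ℕ, (‖f n p‖₊ : ENNReal) ∂(μ.prod ν)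
        ≤ ∫⁻ _, 1 ∂(μ.prod ν) := lintegral_mono hpt
      _ = 1 := by simp
  have hbound' : ∑' n : ℕ, ∫⁻ p, ‖f n p‖₊ ∂(μ.prod ν) ≠ ⊤ :=
    (lt_of_le_of_lt hbound ENNReal.one_lt_top).ne
  -- integrals of each term
  have hint : ∀ n, ∫ p, f n p ∂(μ.prod ν)
      = (1 / (σ ^ (2 * n) * n.factorial)) * (weightedMoment σ n μ * weightedMoment σ n ν) := by
    intro n
    rw [hf]
    simp only
    rw [integral_const_mul, integral_prod_mul (fun x => gW σ n x) (fun y => gW σ n y)]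
    rfl
  -- swap
  have hswap := integral_tsum hfm hbound'
  have htsum_pt : ∀ p : ℝ × ℝ, ∑' n, f n p = gaussKernel σ p.1 p.2 := fun p =>
    (pointwise_hasSum σ hσ p.1 p.2).tsum_eq
  -- gaussKernel integrable on product
  have hkc : Continuous (fun p : ℝ × ℝ => gaussKernel σ p.1 p.2) := by
    unfold gaussKernel; fun_prop
  have hki : Integrable (fun p : ℝ × ℝ => gaussKernel σ p.1 p.2) (μ.prod ν) := by
    apply Integrable.mono' (integrable_const (1:ℝ)) hkc.aestronglyMeasurable
    filter_upwards with p
    have hpos : 0 < gaussKernel σ p.1 p.2 := Real.exp_pos _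
    rw [Real.norm_eq_abs, abs_of_pos hpos]
    exact gaussKernel_le_one σ hσ _ _
  constructor
  · rw [← integral_prod _ hki, ← (funext htsum_pt : (fun p : ℝ×ℝ => ∑' n, f n p) = _)]
    rw [hswap]
    exact tsum_congr hint
  · have hsum : Summable (fun n => (∫⁻ p, ‖f n p‖₊ ∂(μ.prod ν)).toReal) :=
      ENNReal.summable_toReal hbound'
    apply Summable.of_norm_bounded hsum
    intro n
    rw [← hint n]
    have := norm_integral_le_lintegral_norm (μ := μ.prod ν) (f n)
    simpa [← Real.enorm_eq_ofReal_abs, enorm_eq_nnnorm] using this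

/-- For the Gaussian kernel `k(x,y) = exp(−(x−y)²/(2σ²))` on `ℝ` and any two
probability measures `μ, ν` on `ℝ`, the squared MMD decomposes as
`MMD²(μ, ν; k) = ∑_{n=0}^∞ (1/(σ^{2n} n!)) (m̃ₙ(μ) − m̃ₙ(ν))²`,
where `m̃ₙ(μ) = E_{x∼μ}[e^{−x²/(2σ²)} xⁿ]`. -/
theorem stmt_14 (σ : ℝ) (hσ : 0 < σ)
    (μ ν : Measure ℝ) [IsProbabilityMeasure μ] [IsProbabilityMeasure ν] :
    mmdSq (gaussKernel σ) μ ν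
      = ∑' n : ℕ, (1 / (σ ^ (2 * n) * n.factorial))
          * (weightedMoment σ n μ - weightedMoment σ n ν) ^ 2 := by
  obtain ⟨e1, s1⟩ := key σ hσ μ μ
  obtain ⟨e2, s2⟩ := key σ hσ ν ν
  obtain ⟨e3, s3⟩ := key σ hσ μ ν
  unfold mmdSq
  rw [e1, e2, e3]
  have hterm : ∀ n : ℕ, (1 / (σ ^ (2 * n) * n.factorial))
      * (weightedMoment σ n μ - weightedMoment σ n ν) ^ 2
    = (1 / (σ ^ (2 * n) * n.factorial)) * (weightedMoment σ n μ * weightedMoment σ n μ)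
      + (1 / (σ ^ (2 * n) * n.factorial)) * (weightedMoment σ n ν * weightedMoment σ n ν)
      - 2 * ((1 / (σ ^ (2 * n) * n.factorial)) * (weightedMoment σ n μ * weightedMoment σ n ν)) :=
    fun n => by ring
  rw [tsum_congr hterm, Summable.tsum_sub (s1.add s2) (s3.mul_left 2), Summable.tsum_add s1 s2, tsum_mul_left]
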